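/- arXiv:2405.04465 — 3 statements merged into one kernel-verified Lean document; each statement's English description precedes it below -/
import Mathlib

section
/- Let d̲ := inf Supp(D₂) > 0 with E[D₂ − d̲] > 0. Assume (i) lim_{d ↓ d̲} E[ΔY(0) | D₂ ≤ d] = E[ΔY(0)], (ii) lim_{d ↓ d̲} E[(D₂ − d̲)·TE₂ | D₂ ≤ d] = 0, and (iii) lim_{d ↓ d̲} E[TE₂ | D₂ ≤ d] / WAS < E[D₂]/d̲ (with the convention 0/0 = 0, and requiring lim_{d ↓ d̲} E[TE₂ | D₂ ≤ d] ≤ 0 if WAS = 0). Then WAS ≥ 0 if and only if (E[ΔY] − lim_{d ↓ d̲} E[ΔY | D₂ ≤ d]) / E[D₂ − d̲] ≥ 0. -/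
open MeasureTheory Filter Set

/-- Theorem 2 of the paper: identification of the sign of WAS
in designs without a quasi-untreated group. -/
theorem sign_of_WAS_identification {Ω : Type*} [MeasurableSpace Ω]
    (μ : Measure Ω) [IsProbabilityMeasure μ]
    (D : Ω → ℝ) (Y1 : Ω → ℝ) (Y2 : ℝ → Ω → ℝ) (dlow L Lte : ℝ)
    (hdlow : 0 < dlow)
    (hDlb : ∀ᵐ ω ∂μ, dlow ≤ D ω)
    (hQ : ∀ d : ℝ, dlow < d → 0 < μ {ω | D ω ≤ d})
    (hDint : Integrable D μ) (hED : 0 < ∫ ω, D ω ∂μ)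
    (hEDd : 0 < ∫ ω, (D ω - dlow) ∂μ)
    (hY1 : Integrable Y1 μ)
    (hY20 : Integrable (fun ω => Y2 0 ω) μ)
    (hY2D : Integrable (fun ω => Y2 (D ω) ω) μ)
    (hTEint : Integrable (fun ω => (Y2 (D ω) ω - Y2 0 ω) / D ω) μ)
    -- (i) parallel trends between the least treated and the full population
    (hPT : Tendsto (fun d : ℝ =>
        (∫ ω in {ω | D ω ≤ d}, (Y2 0 ω - Y1 ω) ∂μ) / (μ {ω | D ω ≤ d}).toReal)
      (nhdsWithin dlow (Ioi dlow)) (nhds (∫ ω, (Y2 0 ω - Y1 ω) ∂μ)))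
    -- (ii) lim_{d ↓ d̲} E[(D₂ − d̲)·TE₂ | D₂ ≤ d] = 0
    (hUC : Tendsto (fun d : ℝ =>
        (∫ ω in {ω | D ω ≤ d}, ((D ω - dlow) * ((Y2 (D ω) ω - Y2 0 ω) / D ω)) ∂μ)
          / (μ {ω | D ω ≤ d}).toReal)
      (nhdsWithin dlow (Ioi dlow)) (nhds 0))
    -- the limit lim_{d ↓ d̲} E[ΔY | D₂ ≤ d] exists and equals L
    (hL : Tendsto (fun d : ℝ =>
        (∫ ω in {ω | D ω ≤ d}, (Y2 (D ω) ω - Y1 ω) ∂μ) / (μ {ω | D ω ≤ d}).toReal)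
      (nhdsWithin dlow (Ioi dlow)) (nhds L))
    -- the limit lim_{d ↓ d̲} E[TE₂ | D₂ ≤ d] exists and equals Lte
    (hLte : Tendsto (fun d : ℝ =>
        (∫ ω in {ω | D ω ≤ d}, ((Y2 (D ω) ω - Y2 0 ω) / D ω) ∂μ)
          / (μ {ω | D ω ≤ d}).toReal)
      (nhdsWithin dlow (Ioi dlow)) (nhds Lte))
    -- (iii) Assumption 5 of the paper, with the convention 0/0 = 0:
    (hsign₁ : (∫ ω, (Y2 (D ω) ω - Y2 0 ω) ∂μ) / (∫ ω, D ω ∂μ) ≠ 0 →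
      Lte / ((∫ ω, (Y2 (D ω) ω - Y2 0 ω) ∂μ) / (∫ ω, D ω ∂μ))
        < (∫ ω, D ω ∂μ) / dlow)
    (hsign₂ : (∫ ω, (Y2 (D ω) ω - Y2 0 ω) ∂μ) / (∫ ω, D ω ∂μ) = 0 → Lte ≤ 0) :
    0 ≤ (∫ ω, (Y2 (D ω) ω - Y2 0 ω) ∂μ) / (∫ ω, D ω ∂μ)
      ↔ 0 ≤ ((∫ ω, (Y2 (D ω) ω - Y1 ω) ∂μ) - L) / ∫ ω, (D ω - dlow) ∂μ := by
  set TE : Ω → ℝ := fun ω => (Y2 (D ω) ω - Y2 0 ω) / D ω with hTEdef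
  -- pointwise a.e. identities
  have hpos : ∀ᵐ ω ∂μ, D ω ≠ 0 := by
    filter_upwards [hDlb] with ω hω
    exact ne_of_gt (lt_of_lt_of_le hdlow hω)
  have h1 : ∀ᵐ ω ∂μ, (D ω - dlow) * TE ω
      = (Y2 (D ω) ω - Y2 0 ω) - dlow * TE ω := by
    filter_upwards [hpos] with ω hω
    have : D ω * TE ω = Y2 (D ω) ω - Y2 0 ω := by
      simp only [hTEdef]; field_simp
    nlinarith [this]
  have h0 : ∀ᵐ ω ∂μ, Y2 (D ω) ω - Y1 ω
      = (Y2 0 ω - Y1 ω) + ((D ω - dlow) * TE ω + dlow * TE ω) := by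
    filter_upwards [h1] with ω hω
    rw [hω]; ring
  have hUCint : Integrable (fun ω => (D ω - dlow) * TE ω) μ := by
    have hint : Integrable (fun ω => (Y2 (D ω) ω - Y2 0 ω) - dlow * TE ω) μ :=
      (hY2D.sub hY20).sub (hTEint.const_mul dlow)
    exact hint.congr (h1.mono fun ω h => h.symm)
  -- decomposition of the conditional expectations
  have hsplit : ∀ d : ℝ,
      (∫ ω in {ω | D ω ≤ d}, (Y2 (D ω) ω - Y1 ω) ∂μ)
        = (∫ ω in {ω | D ω ≤ d}, (Y2 0 ω - Y1 ω) ∂μ)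
          + ((∫ ω in {ω | D ω ≤ d}, (D ω - dlow) * TE ω ∂μ)
            + dlow * (∫ ω in {ω | D ω ≤ d}, TE ω ∂μ)) := by
    intro d
    have i1 : Integrable (fun ω => Y2 0 ω - Y1 ω) (μ.restrict {ω | D ω ≤ d}) :=
      (hY20.sub hY1).restrict
    have i3 : Integrable (fun ω => (D ω - dlow) * TE ω) (μ.restrict {ω | D ω ≤ d}) :=
      hUCint.restrict
    have i4 : Integrable (fun ω => dlow * TE ω) (μ.restrict {ω | D ω ≤ d}) :=
      (hTEint.const_mul dlow).restrict
    have i2 : Integrable (fun ω => (D ω - dlow) * TE ω + dlow * TE ω)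
        (μ.restrict {ω | D ω ≤ d}) := i3.add i4
    rw [integral_congr_ae (ae_restrict_of_ae h0), integral_add i1 i2,
      integral_add i3 i4, integral_const_mul]
  -- identify L by uniqueness of limits
  have hL' : Tendsto (fun d : ℝ =>
      (∫ ω in {ω | D ω ≤ d}, (Y2 (D ω) ω - Y1 ω) ∂μ) / (μ {ω | D ω ≤ d}).toReal)
      (nhdsWithin dlow (Ioi dlow))
      (nhds ((∫ ω, (Y2 0 ω - Y1 ω) ∂μ) + (0 + dlow * Lte))) := by
    have : (fun d : ℝ =>
        (∫ ω in {ω | D ω ≤ d}, (Y2 (D ω) ω - Y1 ω) ∂μ) / (μ {ω | D ω ≤ d}).toReal)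
        = fun d : ℝ =>
          ((∫ ω in {ω | D ω ≤ d}, (Y2 0 ω - Y1 ω) ∂μ) / (μ {ω | D ω ≤ d}).toReal)
          + (((∫ ω in {ω | D ω ≤ d}, (D ω - dlow) * TE ω ∂μ) / (μ {ω | D ω ≤ d}).toReal)
            + dlow * ((∫ ω in {ω | D ω ≤ d}, TE ω ∂μ) / (μ {ω | D ω ≤ d}).toReal)) := by
      funext d
      rw [hsplit d]
      ring
    rw [this]
    exact hPT.add (hUC.add (hLte.const_mul dlow))
  have hLeq : L = (∫ ω, (Y2 0 ω - Y1 ω) ∂μ) + dlow * Lte := by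
    have := tendsto_nhds_unique hL hL'
    linarith [this]
  -- algebraic reduction
  set A := ∫ ω, (Y2 (D ω) ω - Y2 0 ω) ∂μ with hA
  set ED := ∫ ω, D ω ∂μ with hEDdef
  have hnum : (∫ ω, (Y2 (D ω) ω - Y1 ω) ∂μ) - L = A - dlow * Lte := by
    rw [hLeq, hA, integral_sub hY2D hY1, integral_sub hY20 hY1,
      integral_sub hY2D hY20]
    ring
  rw [hnum]
  have hEden : (0:ℝ) < ∫ ω, (D ω - dlow) ∂μ := hEDd
  have hiff1 : (0 ≤ A / ED) ↔ 0 ≤ A := by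
    constructor
    · intro h
      by_contra hneg
      push_neg at hneg
      exact absurd h (not_le.mpr (div_neg_of_neg_of_pos hneg hED))
    · intro h; exact div_nonneg h hED.le
  have hiff2 : (0 ≤ (A - dlow * Lte) / ∫ ω, (D ω - dlow) ∂μ) ↔ 0 ≤ A - dlow * Lte := by
    constructor
    · intro h
      by_contra hneg
      push_neg at hneg
      exact absurd h (not_le.mpr (div_neg_of_neg_of_pos hneg hEden))
    · intro h; exact div_nonneg h hEden.le
  rw [hiff1, hiff2]
  -- case analysis on the sign of A
  rcases lt_trichotomy A 0 with hAneg | hAzero | hApos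
  · have hWneg : A / ED < 0 := div_neg_of_neg_of_pos hAneg hED
    have hs := hsign₁ (ne_of_lt hWneg)
    -- Lte / (A/ED) < ED/dlow, with A/ED < 0
    have h2 : (ED / dlow) * (A / ED) < Lte := (div_lt_iff_of_neg hWneg).mp hs
    have h3 : (ED / dlow) * (A / ED) = A / dlow := by
      field_simp
    rw [h3] at h2
    have h4 : A < dlow * Lte := by
      have := (div_lt_iff₀ hdlow).mp h2
      linarith
    constructor
    · intro h; linarith
    · intro h; linarith
  · simp only [hAzero]
    have hLte0 : Lte ≤ 0 := hsign₂ (by rw [hAzero, zero_div])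
    constructor
    · intro _; nlinarith
    · intro _; exact le_refl 0
  · have hWpos : 0 < A / ED := div_pos hApos hED
    have hs := hsign₁ (ne_of_gt hWpos)
    have h2 : Lte * dlow < ED * (A / ED) := (div_lt_div_iff₀ hWpos hdlow).mp hs
    have h3 : ED * (A / ED) = A := by field_simp
    rw [h3] at h2
    constructor
    · intro _; nlinarith
    · intro _; exact hApos.le
end

section
/- For real random variables ΔY(0), TE₂ and D₂ > 0 a.s. with finite second moments and Var(D₂) > 0, if E[ΔY(0) | D₂] = μ₀ is constant, then β_fe := E[(D₂ − E[D₂])·ΔY] / E[(D₂ − E[D₂])·D₂] = E[ w(D₂) · E(TE₂ | D₂) ], where ΔY = ΔY(0) + D₂·TE₂ and w(d) = (d − E[D₂])·d / E[(D₂ − E[D₂])·D₂]. -/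
open MeasureTheory Filter Set ProbabilityTheory

/-- under parallel trends across all treatment doses, the probability
limit `β_fe` of the TWFE estimator is a weighted average of the conditional average
slopes `E[TE₂ | D₂]`, with weights `w(D₂) = (D₂ − E[D₂])·D₂ / E[(D₂ − E[D₂])·D₂]`. -/
theorem TWFE_decomposition {Ω : Type*} [m0 : MeasurableSpace Ω]
    (μ : Measure Ω) [IsProbabilityMeasure μ]
    (D ΔY0 TE : Ω → ℝ) (μ₀ : ℝ)
    (hDmeas : Measurable D)
    (hDpos : ∀ᵐ ω ∂μ, 0 < D ω)
    (hD2 : MemLp D 2 μ)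
    (hVar : 0 < ∫ ω, (D ω - ∫ x, D x ∂μ) * D ω ∂μ)
    (hΔY0 : Integrable ΔY0 μ) (hTE : Integrable TE μ)
    (hDTE : Integrable (fun ω => D ω * TE ω) μ)
    (hprod : Integrable (fun ω => (D ω - ∫ x, D x ∂μ) * (ΔY0 ω + D ω * TE ω)) μ)
    (hwprod : Integrable (fun ω =>
      ((D ω - ∫ x, D x ∂μ) * D ω) * (μ[TE | MeasurableSpace.comap D inferInstance]) ω) μ)
    -- parallel trends across all treatment doses: E[ΔY(0) | D₂] = μ₀
    (hCE : μ[ΔY0 | MeasurableSpace.comap D inferInstance] =ᵐ[μ] fun _ => μ₀) :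
    (∫ ω, (D ω - ∫ x, D x ∂μ) * (ΔY0 ω + D ω * TE ω) ∂μ)
        / (∫ ω, (D ω - ∫ x, D x ∂μ) * D ω ∂μ)
      = ∫ ω, ((D ω - ∫ x, D x ∂μ) * D ω / (∫ x, (D x - ∫ y, D y ∂μ) * D x ∂μ))
          * (μ[TE | MeasurableSpace.comap D inferInstance]) ω ∂μ := by
  set m : MeasurableSpace Ω := MeasurableSpace.comap D inferInstance with hm_def
  have hm : m ≤ m0 := hDmeas.comap_le
  set c : ℝ := ∫ x, D x ∂μ with hc
  have hDm : Measurable[m] D := measurable_iff_comap_le.mpr le_rfl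
  have hDsm : StronglyMeasurable[m] D := hDm.stronglyMeasurable
  have hfsm : StronglyMeasurable[m] (fun ω => D ω - c) :=
    hDsm.sub (stronglyMeasurable_const)
  have hDint : Integrable D μ := hD2.integrable (by norm_num)
  have hg : Integrable (fun ω => ΔY0 ω + D ω * TE ω) μ := hΔY0.add hDTE
  -- pull-out for the whole product
  have h1 : μ[(fun ω => (D ω - c) * (ΔY0 ω + D ω * TE ω)) | m]
      =ᵐ[μ] fun ω => (D ω - c) * (μ[(fun ω => ΔY0 ω + D ω * TE ω) | m]) ω :=
    condExp_mul_of_stronglyMeasurable_left hfsm hprod hg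
  -- condexp of sum
  have h2 : μ[(fun ω => ΔY0 ω + D ω * TE ω) | m]
      =ᵐ[μ] μ[ΔY0 | m] + μ[(fun ω => D ω * TE ω) | m] := condExp_add hΔY0 hDTE m
  -- pull-out for D * TE
  have h3 : μ[(fun ω => D ω * TE ω) | m] =ᵐ[μ] fun ω => D ω * (μ[TE | m]) ω :=
    condExp_mul_of_stronglyMeasurable_left hDsm hDTE hTE
  have hint1 : (∫ ω, (D ω - c) * (ΔY0 ω + D ω * TE ω) ∂μ)
      = ∫ ω, (D ω - c) * ((μ[(fun ω => ΔY0 ω + D ω * TE ω) | m]) ω) ∂μ := by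
    rw [← integral_condExp hm]
    exact integral_congr_ae h1
  have hae : (fun ω => (D ω - c) * ((μ[(fun ω => ΔY0 ω + D ω * TE ω) | m]) ω))
      =ᵐ[μ] fun ω => (D ω - c) * μ₀ + ((D ω - c) * D ω) * (μ[TE | m]) ω := by
    filter_upwards [h2, h3, hCE] with ω h2ω h3ω hCEω
    have : (μ[(fun ω => ΔY0 ω + D ω * TE ω) | m]) ω
        = μ₀ + D ω * (μ[TE | m]) ω := by
      rw [h2ω]; simp only [Pi.add_apply, h3ω, hCEω]
    rw [this]; ring
  have hintc : Integrable (fun ω => (D ω - c) * μ₀) μ :=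
    (hDint.sub (integrable_const c)).mul_const μ₀
  have hnum : (∫ ω, (D ω - c) * (ΔY0 ω + D ω * TE ω) ∂μ)
      = ∫ ω, ((D ω - c) * D ω) * (μ[TE | m]) ω ∂μ := by
    rw [hint1, integral_congr_ae hae, integral_add hintc hwprod]
    have : (∫ ω, (D ω - c) * μ₀ ∂μ) = 0 := by
      rw [integral_mul_const, integral_sub hDint (integrable_const c)]
      simp [hc]
    rw [this, zero_add]
  rw [hnum]
  rw [show (∫ ω, ((D ω - c) * D ω / (∫ x, (D x - ∫ y, D y ∂μ) * D x ∂μ))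
          * (μ[TE | m]) ω ∂μ)
      = ∫ ω, (((D ω - c) * D ω) * (μ[TE | m]) ω) / (∫ x, (D x - c) * D x ∂μ) ∂μ from
    integral_congr_ae (Eventually.of_forall fun ω => by rw [← hc]; ring)]
  rw [integral_div]
end

section
/- If E[ΔY(0) | D₂] = μ₀ (a constant) and E[TE₂ | D₂] = AS (a constant), then E[ΔY | D₂] = μ₀ + AS·D₂, i.e. the conditional expectation of ΔY given D₂ is an affine function of D₂ with slope AS, and moreover the population linear-regression slope β_fe = Cov(D₂, ΔY)/Var(D₂) equals AS. -/
open MeasureTheory Filter Set ProbabilityTheory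

lemma integrable_mul_of_memL2 {Ω : Type*} [MeasurableSpace Ω] {μ : Measure Ω}
    {f g : Ω → ℝ} (hf : MemLp f 2 μ) (hg : MemLp g 2 μ) :
    Integrable (fun ω => f ω * g ω) μ := by
  have h : MemLp (f • g) 1 μ := hg.smul hf (hpqr := ⟨by
    rw [ENNReal.inv_two_add_inv_two, inv_one]⟩)
  exact memLp_one_iff_integrable.mp h

/-- Point 1 of Theorem 4 of the paper: if `E[ΔY(0) | D₂] = μ₀` and
`E[TE₂ | D₂] = AS` are constant, then `E[ΔY | D₂] = μ₀ + AS·D₂` and the population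
linear-regression slope `β_fe = Cov(D₂, ΔY)/Var(D₂)` equals `AS`. -/
theorem TWFE_linearity_and_consistency {Ω : Type*} [m0 : MeasurableSpace Ω]
    (μ : Measure Ω) [IsProbabilityMeasure μ]
    (D ΔY0 TE : Ω → ℝ) (μ₀ AS : ℝ)
    (hDmeas : Measurable D)
    (hDpos : ∀ᵐ ω ∂μ, 0 < D ω)
    (hD2 : MemLp D 2 μ)
    (hVar : 0 < ∫ ω, (D ω - ∫ x, D x ∂μ) ^ 2 ∂μ)
    (hΔY0 : Integrable ΔY0 μ) (hTE : Integrable TE μ)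
    (hDTE : Integrable (fun ω => D ω * TE ω) μ)
    (hΔY2 : MemLp (fun ω => ΔY0 ω + D ω * TE ω) 2 μ)
    -- parallel trends across all treatment doses: E[ΔY(0) | D₂] = μ₀
    (hCE0 : μ[ΔY0 | MeasurableSpace.comap D inferInstance] =ᵐ[μ] fun _ => μ₀)
    -- homogeneous and linear effect: E[TE₂ | D₂] = AS
    (hCET : μ[TE | MeasurableSpace.comap D inferInstance] =ᵐ[μ] fun _ => AS) :
    (μ[fun ω => ΔY0 ω + D ω * TE ω | MeasurableSpace.comap D inferInstance]
        =ᵐ[μ] fun ω => μ₀ + AS * D ω) ∧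
    (∫ ω, (D ω - ∫ x, D x ∂μ) *
        ((ΔY0 ω + D ω * TE ω) - ∫ x, (ΔY0 x + D x * TE x) ∂μ) ∂μ)
      / (∫ ω, (D ω - ∫ x, D x ∂μ) ^ 2 ∂μ) = AS := by
  set m := MeasurableSpace.comap D inferInstance with hm_def
  have hm : m ≤ m0 := measurable_iff_comap_le.mp hDmeas
  have hDm : Measurable[m] D := measurable_iff_comap_le.mpr le_rfl
  have hΔY : Integrable (fun ω => ΔY0 ω + D ω * TE ω) μ := hΔY0.add hDTE
  -- Part 1
  have hpart1 : μ[fun ω => ΔY0 ω + D ω * TE ω | m] =ᵐ[μ] fun ω => μ₀ + AS * D ω := by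
    have hadd : μ[fun ω => ΔY0 ω + D ω * TE ω | m]
        =ᵐ[μ] μ[ΔY0 | m] + μ[(fun ω => D ω * TE ω) | m] :=
      condExp_add hΔY0 hDTE m
    have hmul : μ[(fun ω => D ω * TE ω) | m] =ᵐ[μ] fun ω => D ω * (μ[TE | m]) ω :=
      condExp_mul_of_stronglyMeasurable_left hDm.stronglyMeasurable hDTE hTE
    filter_upwards [hadd, hmul, hCE0, hCET] with ω h1 h2 h3 h4
    simp only [Pi.add_apply] at h1
    rw [h1, h2, h3, h4, mul_comm]
  refine ⟨hpart1, ?_⟩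
  -- Part 2
  set a := ∫ x, D x ∂μ with ha
  set b := ∫ x, (ΔY0 x + D x * TE x) ∂μ with hb
  have hDa2 : MemLp (fun ω => D ω - a) 2 μ := hD2.sub (memLp_const a)
  have hDam : Measurable[m] fun ω => D ω - a := hDm.sub (@measurable_const ℝ Ω _ m a)
  have hfb2 : MemLp (fun ω => (ΔY0 ω + D ω * TE ω) - b) 2 μ := hΔY2.sub (memLp_const b)
  have hfb : Integrable (fun ω => (ΔY0 ω + D ω * TE ω) - b) μ := hΔY.sub (integrable_const b)
  have hIntCov : Integrable (fun ω => (D ω - a) * ((ΔY0 ω + D ω * TE ω) - b)) μ :=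
    @integrable_mul_of_memL2 Ω m0 μ _ _ hDa2 hfb2
  have hIntVar : Integrable (fun ω => (D ω - a) ^ 2) μ := by
    have := @integrable_mul_of_memL2 Ω m0 μ _ _ hDa2 hDa2
    simpa [sq] using this
  have hIntDa : Integrable (fun ω => D ω - a) μ := hD2.integrable one_le_two |>.sub (integrable_const a)
  have hzero : ∫ ω, (D ω - a) ∂μ = 0 := by
    rw [integral_sub (hD2.integrable one_le_two) (integrable_const a)]
    simp [ha]
  -- conditional expectation of the centered outcome
  have hcond : μ[(fun ω => (ΔY0 ω + D ω * TE ω) - b) | m]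
      =ᵐ[μ] fun ω => (μ₀ + AS * D ω) - b := by
    have hsub : μ[(fun ω => (ΔY0 ω + D ω * TE ω) - b) | m]
        =ᵐ[μ] μ[(fun ω => ΔY0 ω + D ω * TE ω) | m] - μ[(fun _ => b) | m] :=
      condExp_sub hΔY (integrable_const b) m
    have hconst : μ[(fun _ : Ω => b) | m] = fun _ => b := condExp_const hm b
    filter_upwards [hsub, hpart1] with ω h1 h2
    simp only [Pi.sub_apply] at h1
    rw [h1, h2, hconst]
  -- the pull-out computation
  have hpull : μ[(fun ω => (D ω - a) * ((ΔY0 ω + D ω * TE ω) - b)) | m]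
      =ᵐ[μ] fun ω => (D ω - a) * (μ[(fun ω => (ΔY0 ω + D ω * TE ω) - b) | m]) ω :=
    condExp_mul_of_stronglyMeasurable_left hDam.stronglyMeasurable hIntCov hfb
  have hcov : ∫ ω, (D ω - a) * ((ΔY0 ω + D ω * TE ω) - b) ∂μ
      = ∫ ω, (D ω - a) * ((μ₀ + AS * D ω) - b) ∂μ := by
    have h1 : ∫ ω, (D ω - a) * ((ΔY0 ω + D ω * TE ω) - b) ∂μ
        = ∫ ω, (μ[(fun ω => (D ω - a) * ((ΔY0 ω + D ω * TE ω) - b)) | m]) ω ∂μ :=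
      (integral_condExp hm).symm
    rw [h1]
    refine integral_congr_ae ?_
    filter_upwards [hpull, hcond] with ω h2 h3
    rw [h2, h3]
  -- algebra
  have hexp : ∀ ω, (D ω - a) * ((μ₀ + AS * D ω) - b)
      = AS * (D ω - a) ^ 2 + (μ₀ + AS * a - b) * (D ω - a) := by
    intro ω; ring
  have hIntRight : Integrable (fun ω => AS * (D ω - a) ^ 2 + (μ₀ + AS * a - b) * (D ω - a)) μ :=
    (hIntVar.const_mul AS).add (hIntDa.const_mul _)
  have hcov2 : ∫ ω, (D ω - a) * ((μ₀ + AS * D ω) - b) ∂μ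
      = AS * ∫ ω, (D ω - a) ^ 2 ∂μ := by
    calc ∫ ω, (D ω - a) * ((μ₀ + AS * D ω) - b) ∂μ
        = ∫ ω, (AS * (D ω - a) ^ 2 + (μ₀ + AS * a - b) * (D ω - a)) ∂μ := by
          refine integral_congr_ae (Eventually.of_forall fun ω => hexp ω)
      _ = AS * ∫ ω, (D ω - a) ^ 2 ∂μ + (μ₀ + AS * a - b) * ∫ ω, (D ω - a) ∂μ := by
          rw [integral_add (hIntVar.const_mul AS) (hIntDa.const_mul _),
            integral_const_mul, integral_const_mul]
      _ = AS * ∫ ω, (D ω - a) ^ 2 ∂μ := by rw [hzero]; ring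
  rw [hcov, hcov2]
  field_simp
end
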